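/- For the uniform distribution P on the 4×4 grid S = {(i,j) : 1 ≤ i,j ≤ 4}, the set β = {(2.8, 3.6), (5/3, 5/3), (3.6, 1.8), (1, 3.5), (1,1)} satisfies the centroid condition (each point of β is the mean of the grid points in its Voronoi region) but has distortion error 59/96 ≈ 0.614583, which is strictly larger than the distortion error 7/16 = 0.4375 of the set α₅ = {(7/2,7/2), (3/2,3/2), (3/2,4), (7/2,3/2), (3/2,3)}. Hence the centroid condition is necessary but not sufficient for optimality of a quantizer. -/
import Mathlib


open scoped Classical

private lemma cast_inj' : Function.Injective (fun p : ℕ × ℕ => ((p.1 : ℝ), (p.2 : ℝ))) := by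
  intro p q h
  simp only [Prod.mk.injEq, Nat.cast_inj] at h
  exact Prod.ext h.1 h.2

set_option maxHeartbeats 4000000 in
/-- For the uniform distribution on the 4×4 grid, the set
β = {(2.8,3.6), (5/3,5/3), (3.6,1.8), (1,3.5), (1,1)} satisfies the centroid condition
(each point is the mean of the grid points in its Voronoi cell), yet its distortion
error 59/96 is strictly larger than the distortion error 7/16 of
α₅ = {(7/2,7/2), (3/2,3/2), (3/2,4), (7/2,3/2), (3/2,3)}: the centroid condition is
necessary but not sufficient for optimality. -/
theorem centroid_condition_not_sufficient
    (d : ℝ × ℝ → ℝ × ℝ → ℝ) (hd : d = fun s a => (s.1 - a.1) ^ 2 + (s.2 - a.2) ^ 2)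
    (grid : Finset (ℝ × ℝ))
    (hgrid : grid = (Finset.Icc (1:ℕ) 4 ×ˢ Finset.Icc (1:ℕ) 4).image
      (fun p => ((p.1 : ℝ), (p.2 : ℝ))))
    (β : List (ℝ × ℝ))
    (hβ : β = [(2.8, 3.6), (5 / 3, 5 / 3), (3.6, 1.8), (1, 3.5), (1, 1)])
    (α₅ : List (ℝ × ℝ))
    (hα : α₅ = [(7 / 2, 7 / 2), (3 / 2, 3 / 2), (3 / 2, 4), (7 / 2, 3 / 2), (3 / 2, 3)]) :
    (∀ b ∈ β,
      ((((grid.filter (fun s => ∀ b' ∈ β, d s b ≤ d s b')).card : ℝ))⁻¹ *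
          ∑ s ∈ grid.filter (fun s => ∀ b' ∈ β, d s b ≤ d s b'), s.1,
        (((grid.filter (fun s => ∀ b' ∈ β, d s b ≤ d s b')).card : ℝ))⁻¹ *
          ∑ s ∈ grid.filter (fun s => ∀ b' ∈ β, d s b ≤ d s b'), s.2) = b) ∧
    (∑ s ∈ grid, (β.map (fun b => d s b)).foldr min (d s (1, 1))) / 16 = 59 / 96 ∧
    (∑ s ∈ grid, (α₅.map (fun a => d s a)).foldr min (d s (3 / 2, 3))) / 16 = 7 / 16 ∧
    (7 / 16 : ℝ) < 59 / 96 := by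
  subst hd hβ hα hgrid
  refine ⟨?_, ?_, ?_, by norm_num⟩
  · intro b hb
    simp only [List.mem_cons, List.not_mem_nil, or_false] at hb
    rcases hb with rfl | rfl | rfl | rfl | rfl <;>
    · simp only [List.forall_mem_cons, List.forall_mem_nil, and_true]
      rw [Finset.filter_image, Finset.card_image_of_injective _ cast_inj',
        Finset.sum_image (fun a _ b _ h => cast_inj' h),
        Finset.sum_image (fun a _ b _ h => cast_inj' h),
        Finset.natCast_card_filter, Finset.sum_filter, Finset.sum_filter,
        Finset.sum_product, Finset.sum_product, Finset.sum_product,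
        show Finset.Icc (1:ℕ) 4 = {1,2,3,4} from rfl]
      norm_num [Finset.sum_insert, Finset.mem_insert, Prod.mk.injEq, -Finset.sum_boole]
  · rw [Finset.sum_image (fun a _ b _ h => cast_inj' h), Finset.sum_product,
      show Finset.Icc (1:ℕ) 4 = {1,2,3,4} from rfl]
    norm_num [Finset.sum_insert, Finset.mem_insert, min_def]
  · rw [Finset.sum_image (fun a _ b _ h => cast_inj' h), Finset.sum_product,
      show Finset.Icc (1:ℕ) 4 = {1,2,3,4} from rfl]
    norm_num [Finset.sum_insert, Finset.mem_insert, min_def]
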